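/- Let z ∈ ℝⁿ be any vector and h ∈ ℝⁿ any k-sparse vector. Let z* be any k-sparse vector minimizing ‖z − d‖₂ over all k-sparse vectors d ∈ ℝⁿ (i.e., z* is a hard thresholding H_k(z) of z). Set S = supp(h) and S* = supp(z*). Then ‖h − z*‖₂ ≤ ‖(z − h)_{S*∪S}‖₂ + ‖(z − h)_{S*∖S}‖₂. -/

import Mathlib

open Finset

noncomputable def nsq {ι : Type*} [Fintype ι] (x : ι → ℝ) : ℝ := ∑ i, (x i) ^ 2

noncomputable def n2 {ι : Type*} [Fintype ι] (x : ι → ℝ) : ℝ := Real.sqrt (nsq x)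

noncomputable def supp {n : ℕ} (x : Fin n → ℝ) : Finset (Fin n) :=
  Finset.univ.filter (fun i => x i ≠ 0)

def Sparse {n : ℕ} (k : ℕ) (x : Fin n → ℝ) : Prop := (supp x).card ≤ k

def restr {n : ℕ} (x : Fin n → ℝ) (T : Finset (Fin n)) : Fin n → ℝ :=
  fun i => if i ∈ T then x i else 0

def SatRIP {m n : ℕ} (A : Matrix (Fin m) (Fin n) ℝ) (q : ℕ) (δ : ℝ) : Prop :=
  ∀ z : Fin n → ℝ, Sparse q z →
    (1 - δ) * nsq z ≤ nsq (A.mulVec z) ∧ nsq (A.mulVec z) ≤ (1 + δ) * nsq z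

/-- `δ` is the `q`-th order restricted isometry constant of `A`:
the smallest `δ' ≥ 0` such that `(1-δ')‖z‖² ≤ ‖Az‖² ≤ (1+δ')‖z‖²` for all `q`-sparse `z`. -/
def IsRIC {m n : ℕ} (A : Matrix (Fin m) (Fin n) ℝ) (q : ℕ) (δ : ℝ) : Prop :=
  IsLeast {δ' : ℝ | 0 ≤ δ' ∧ SatRIP A q δ'} δ

/-- membership in `W^k`: binary vectors with exactly `k` entries equal to 1. -/
def InW {n : ℕ} (k : ℕ) (w : Fin n → ℝ) : Prop :=
  (∀ i, w i = 0 ∨ w i = 1) ∧ (Finset.univ.filter (fun i => w i = 1)).card = k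

/-- membership in the polytope `P^k`. -/
def InP {n : ℕ} (k : ℕ) (w : Fin n → ℝ) : Prop :=
  (∑ i, w i) = (k : ℝ) ∧ ∀ i, 0 ≤ w i ∧ w i ≤ 1

/-- `S` is an index set of the `k` largest absolute entries of `x`. -/
def IsTopK {n : ℕ} (x : Fin n → ℝ) (k : ℕ) (S : Finset (Fin n)) : Prop :=
  S.card = k ∧ ∀ i ∈ S, ∀ j ∉ S, |x j| ≤ |x i|

/-- `d` is a hard thresholding `H_k(z)` of `z`. -/
def IsHT {n : ℕ} (k : ℕ) (z d : Fin n → ℝ) : Prop :=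
  Sparse k d ∧ ∀ d' : Fin n → ℝ, Sparse k d' → n2 (z - d) ≤ n2 (z - d')

/-- `w 0, …, w (ω-1)` are successive compression minimizers at `x^p` (with `u^p = up`). -/
def SCM {m n : ℕ} (A : Matrix (Fin m) (Fin n) ℝ) (y : Fin m → ℝ) (k ω : ℕ)
    (up : Fin n → ℝ) (w : ℕ → Fin n → ℝ) : Prop :=
  ∀ j < ω, InP k (w j) ∧ ∀ v : Fin n → ℝ, InP k v →
    n2 (y - A.mulVec (up * (∏ l ∈ Finset.range j, w l) * w j)) ≤
    n2 (y - A.mulVec (up * (∏ l ∈ Finset.range j, w l) * v))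

/-- the `ℓ∞` norm of `x` restricted to `T` (zero if `T` is empty). -/
noncomputable def linfT {n : ℕ} (x : Fin n → ℝ) (T : Finset (Fin n)) : ℝ :=
  if h : T.Nonempty then T.sup' h (fun j => |x j|) else 0

variable {n : ℕ}

lemma nsq_nonneg (x : Fin n → ℝ) : 0 ≤ nsq x := Finset.sum_nonneg fun i _ => sq_nonneg _

lemma n2_mono {x y : Fin n → ℝ} (h : nsq x ≤ nsq y) : n2 x ≤ n2 y := Real.sqrt_le_sqrt h

lemma nsq_le_of_n2_le {x y : Fin n → ℝ} (h : n2 x ≤ n2 y) : nsq x ≤ nsq y := by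
  have hx := Real.sq_sqrt (nsq_nonneg x)
  have hy := Real.sq_sqrt (nsq_nonneg y)
  calc nsq x = (n2 x) ^ 2 := by rw [n2, hx]
    _ ≤ (n2 y) ^ 2 := by
        apply pow_le_pow_left₀ (Real.sqrt_nonneg _) h
    _ = nsq y := by rw [n2, hy]

lemma n2_eq_norm (x : Fin n → ℝ) : n2 x = ‖(WithLp.equiv 2 (Fin n → ℝ)).symm x‖ := by
  rw [EuclideanSpace.norm_eq]
  unfold n2 nsq
  congr 1
  refine Finset.sum_congr rfl fun i _ => ?_
  show x i ^ 2 = ‖x i‖ ^ 2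
  rw [Real.norm_eq_abs, sq_abs]

lemma n2_add_le (x y : Fin n → ℝ) : n2 (x + y) ≤ n2 x + n2 y := by
  rw [n2_eq_norm, n2_eq_norm, n2_eq_norm]
  exact norm_add_le _ _

lemma nsq_restr (x : Fin n → ℝ) (T : Finset (Fin n)) :
    nsq (restr x T) = ∑ i ∈ T, x i ^ 2 := by
  simp only [nsq, restr, apply_ite (fun t : ℝ => t ^ 2)]
  simp [Finset.sum_ite_mem]

lemma not_mem_supp {x : Fin n → ℝ} {i : Fin n} (h : i ∉ supp x) : x i = 0 := by
  simpa [supp] using h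

lemma ht_eq_restr {k : ℕ} {z zs : Fin n → ℝ} (hzs : IsHT k z zs) :
    zs = restr z (supp zs) := by
  obtain ⟨hsp, hmin⟩ := hzs
  set S := supp zs with hS
  have hsub : ∀ T : Finset (Fin n), supp (restr z T) ⊆ T := by
    intro T i hi
    simp only [supp, restr, mem_filter, mem_univ, true_and] at hi
    by_contra hz
    simp [hz] at hi
  have hd : Sparse k (restr z S) :=
    le_trans (Finset.card_le_card (hsub S)) hsp
  have h1 := nsq_le_of_n2_le (hmin _ hd)
  have e1 : nsq (z - zs) = (∑ i ∈ S, (z i - zs i) ^ 2) + ∑ i ∈ Sᶜ, z i ^ 2 := by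
    unfold nsq
    rw [← Finset.sum_add_sum_compl S]
    congr 1
    refine Finset.sum_congr rfl fun i hi => ?_
    have : zs i = 0 := not_mem_supp (by simpa using hi)
    simp [this]
  have e2 : nsq (z - restr z S) = ∑ i ∈ Sᶜ, z i ^ 2 := by
    unfold nsq
    rw [← Finset.sum_add_sum_compl S]
    have h0 : ∑ i ∈ S, (z i - restr z S i) ^ 2 = 0 := by
      apply Finset.sum_eq_zero
      intro i hi
      simp [restr, hi]
    rw [show (∑ i ∈ S, ((z - restr z S) i) ^ 2) = 0 from h0]
    rw [zero_add]
    refine Finset.sum_congr rfl fun i hi => ?_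
    have : i ∉ S := by simpa using hi
    simp [restr, this]
  rw [e1, e2] at h1
  have hsum : ∑ i ∈ S, (z i - zs i) ^ 2 ≤ 0 := by linarith
  have hzero : ∀ i ∈ S, (z i - zs i) ^ 2 = 0 := by
    intro i hi
    have := (Finset.sum_eq_zero_iff_of_nonneg (fun j _ => sq_nonneg (z j - zs j))).mp
      (le_antisymm hsum (Finset.sum_nonneg fun j _ => sq_nonneg _))
    exact this i hi
  funext i
  by_cases hi : i ∈ S
  · have := hzero i hi
    have hz : z i - zs i = 0 := by
      exact pow_eq_zero_iff (by norm_num) |>.mp this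
    simp [restr, hi]
    linarith
  · have : zs i = 0 := not_mem_supp hi
    simp [restr, hi, this]
lemma nsq_sub_restr (z : Fin n → ℝ) (T : Finset (Fin n)) :
    nsq (z - restr z T) = ∑ i ∈ Tᶜ, z i ^ 2 := by
  unfold nsq
  rw [← Finset.sum_add_sum_compl T]
  have h0 : ∑ i ∈ T, ((z - restr z T) i) ^ 2 = 0 :=
    Finset.sum_eq_zero fun i hi => by simp [restr, hi]
  rw [h0, zero_add]
  refine Finset.sum_congr rfl fun i hi => ?_
  have : i ∉ T := by simpa using hi
  simp [restr, this]


theorem stmt5 {n : ℕ} (k : ℕ) (z h zs : Fin n → ℝ)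
    (hh : Sparse k h) (hzs : IsHT k z zs) :
    n2 (h - zs) ≤ n2 (restr (z - h) (supp zs ∪ supp h))
      + n2 (restr (z - h) (supp zs \ supp h)) := by
  set Ss := supp zs with hSs
  set S := supp h with hS
  set U := Ss ∪ S with hU
  have hzr : zs = restr z Ss := ht_eq_restr hzs
  -- decomposition
  have hdec : h - zs = restr (h - z) U + restr z (S \ Ss) := by
    funext i
    by_cases hi1 : i ∈ Ss
    · have hzi : zs i = z i := by rw [hzr]; simp [restr, hi1]
      have hiU : i ∈ U := Finset.mem_union_left _ hi1
      have hiD : i ∉ S \ Ss := by simp [hi1]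
      simp [restr, hiU, hiD, hzi]
    · have hzi : zs i = 0 := not_mem_supp hi1
      by_cases hi2 : i ∈ S
      · have hiU : i ∈ U := Finset.mem_union_right _ hi2
        have hiD : i ∈ S \ Ss := Finset.mem_sdiff.mpr ⟨hi2, hi1⟩
        simp [restr, hiU, hiD, hzi]
      · have hiU : i ∉ U := by simp [hU, hi1, hi2]
        have hiD : i ∉ S \ Ss := by simp [hi2]
        have : h i = 0 := not_mem_supp hi2
        simp [restr, hiU, hiD, hzi, this]
  -- triangle
  have htri : n2 (h - zs) ≤ n2 (restr (h - z) U) + n2 (restr z (S \ Ss)) := by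
    rw [hdec]; exact n2_add_le _ _
  -- first term equality
  have he1 : n2 (restr (h - z) U) = n2 (restr (z - h) U) := by
    unfold n2
    congr 1
    rw [nsq_restr, nsq_restr]
    refine Finset.sum_congr rfl fun i _ => ?_
    simp only [Pi.sub_apply]
    ring
  -- second term inequality
  have hmin := nsq_le_of_n2_le (hzs.2 (restr z S) ?hd)
  case hd =>
    refine le_trans (Finset.card_le_card ?_) hh
    intro i hi
    simp only [supp, restr, mem_filter, mem_univ, true_and] at hi
    by_contra hzc
    simp [hzc] at hi
    exact hzc hi.1
  rw [hzr, nsq_sub_restr, nsq_sub_restr] at hmin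
  have hsum : ∑ i ∈ S, z i ^ 2 ≤ ∑ i ∈ Ss, z i ^ 2 := by
    have h1 := Finset.sum_add_sum_compl S (fun i => z i ^ 2)
    have h2 := Finset.sum_add_sum_compl Ss (fun i => z i ^ 2)
    linarith
  have hdiff : ∑ i ∈ S \ Ss, z i ^ 2 ≤ ∑ i ∈ Ss \ S, z i ^ 2 := by
    have h1 := Finset.sum_inter_add_sum_sdiff S Ss (fun i => z i ^ 2)
    have h2 := Finset.sum_inter_add_sum_sdiff Ss S (fun i => z i ^ 2)
    rw [Finset.inter_comm] at h2
    linarith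
  have he2 : n2 (restr z (S \ Ss)) ≤ n2 (restr (z - h) (Ss \ S)) := by
    apply n2_mono
    rw [nsq_restr, nsq_restr]
    refine le_trans hdiff (le_of_eq (Finset.sum_congr rfl fun i hi => ?_))
    have : h i = 0 := not_mem_supp (Finset.mem_sdiff.mp hi).2
    simp [this]
  calc n2 (h - zs) ≤ n2 (restr (h - z) U) + n2 (restr z (S \ Ss)) := htri
    _ ≤ n2 (restr (z - h) U) + n2 (restr (z - h) (Ss \ S)) := by
        rw [he1]; exact add_le_add_right he2 _
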